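/- If n ≥ 5 and n ≡ 4 (mod 31), then the largest minimum weight among all binary LCD [n,5] codes equals ⌊16n/31⌋ − 2. -/

import Mathlib

/-- The (Hamming) weight of a vector over `F_2`. -/
def wt {n : ℕ} (x : Fin n → ZMod 2) : ℕ :=
  Finset.card (Finset.univ.filter fun i => x i ≠ 0)

/-- The dual code of a binary code `C`, with respect to the standard inner product. -/
def dualCode {n : ℕ} (C : Submodule (ZMod 2) (Fin n → ZMod 2)) :
    Submodule (ZMod 2) (Fin n → ZMod 2) where
  carrier := {x | ∀ y ∈ C, ∑ i, x i * y i = 0}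
  add_mem' := by
    intro a b ha hb y hy
    simp [Pi.add_apply, add_mul, Finset.sum_add_distrib, ha y hy, hb y hy]
  zero_mem' := by
    intro y hy
    simp
  smul_mem' := by
    intro c a ha y hy
    simp only [Pi.smul_apply, smul_eq_mul, mul_assoc, ← Finset.mul_sum, ha y hy, mul_zero]

/-- A binary code is linear complementary dual (LCD) if it meets its dual trivially. -/
def IsLCD {n : ℕ} (C : Submodule (ZMod 2) (Fin n → ZMod 2)) : Prop :=
  C ⊓ dualCode C = ⊥

/-- The minimum weight of a binary code: the smallest weight of a nonzero codeword. -/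
noncomputable def minWt {n : ℕ} (C : Submodule (ZMod 2) (Fin n → ZMod 2)) : ℕ :=
  sInf {w | ∃ x ∈ C, x ≠ 0 ∧ wt x = w}

/-- `dLCD n k` is the largest minimum weight among all binary LCD `[n,k]` codes. -/
noncomputable def dLCD (n k : ℕ) : ℕ :=
  sSup {d | ∃ C : Submodule (ZMod 2) (Fin n → ZMod 2),
    Module.finrank (ZMod 2) C = k ∧ IsLCD C ∧ minWt C = d}


open Finset

def wtI {ι : Type} [Fintype ι] (x : ι → ZMod 2) : ℕ :=
  (Finset.univ.filter fun i => x i ≠ 0).card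

def cd (a b : ℕ) : ℕ := (a + b - 1) / b

lemma cd_le_iff {b : ℕ} (hb : 0 < b) (a x : ℕ) : cd a b ≤ x ↔ a ≤ b * x := by
  unfold cd
  rw [Nat.div_le_iff_le_mul_add_pred hb]
  omega

lemma cd_cd (a i : ℕ) : cd (cd a 2) (2^i) = cd a (2^(i+1)) := by
  have h2 : (0:ℕ) < 2 := by norm_num
  have hp : (0:ℕ) < 2^i := Nat.two_pow_pos i
  have hp1 : (0:ℕ) < 2^(i+1) := Nat.two_pow_pos (i+1)
  apply Nat.le_antisymm
  · rw [cd_le_iff hp, cd_le_iff h2]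
    calc a ≤ 2^(i+1) * cd a (2^(i+1)) := (cd_le_iff hp1 a _).mp le_rfl
      _ = 2 * (2^i * cd a (2^(i+1))) := by ring
  · rw [cd_le_iff hp1]
    have t1 : cd a 2 ≤ 2^i * cd (cd a 2) (2^i) := (cd_le_iff hp _ _).mp le_rfl
    have t2 : a ≤ 2 * cd a 2 := (cd_le_iff h2 a _).mp le_rfl
    calc a ≤ 2 * cd a 2 := t2
      _ ≤ 2 * (2^i * cd (cd a 2) (2^i)) := Nat.mul_le_mul_left _ t1
      _ = 2^(i+1) * cd (cd a 2) (2^i) := by ring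

lemma cd_mono {a a' : ℕ} (b : ℕ) (h : a ≤ a') : cd a b ≤ cd a' b :=
  Nat.div_le_div_right (by omega)

lemma zmod2_cases (z : ZMod 2) : z = 0 ∨ z = 1 := by
  revert z; decide

-- weight splitting along a coordinate predicate
lemma wtI_split {ι : Type} [Fintype ι] [DecidableEq ι] (c x : ι → ZMod 2) :
    wtI x = (univ.filter fun i => x i ≠ 0 ∧ c i ≠ 0).card
          + (univ.filter fun i => x i ≠ 0 ∧ c i = 0).card := by
  unfold wtI
  have hdisj : Disjoint (univ.filter fun i => x i ≠ 0 ∧ c i ≠ 0)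
      (univ.filter fun i => x i ≠ 0 ∧ c i = 0) := by
    rw [Finset.disjoint_left]
    intro a ha hb
    simp only [Finset.mem_filter, Finset.mem_univ, true_and] at ha hb
    exact ha.2 hb.2
  rw [← Finset.card_union_of_disjoint hdisj]
  congr 1
  ext i
  simp only [Finset.mem_union, Finset.mem_filter, Finset.mem_univ, true_and]
  tauto

-- weight of restriction to subtype
lemma wtI_restrict {ι : Type} [Fintype ι] (c x : ι → ZMod 2) :
    wtI (fun i : {i // c i = 0} => x i.val)
      = (univ.filter fun i => x i ≠ 0 ∧ c i = 0).card := by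
  unfold wtI
  rw [← Fintype.card_subtype, ← Fintype.card_subtype]
  apply Fintype.card_congr
  exact {
    toFun := fun a => ⟨a.val.val, a.prop, a.val.prop⟩
    invFun := fun a => ⟨⟨a.val, a.prop.2⟩, a.prop.1⟩
    left_inv := fun a => rfl
    right_inv := fun a => rfl }

-- x supported inside supp c: wtI x + wtI (x+c) = wtI c
lemma wt_add_supported {ι : Type} [Fintype ι] [DecidableEq ι] (c x : ι → ZMod 2)
    (hsupp : ∀ i, c i = 0 → x i = 0) :
    wtI x + wtI (x + c) = wtI c := by
  unfold wtI
  have hB : (univ.filter fun i => (x + c) i ≠ 0)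
      = (univ.filter fun i => c i ≠ 0) \ (univ.filter fun i => x i ≠ 0) := by
    ext i
    simp only [Finset.mem_filter, Finset.mem_sdiff, Finset.mem_univ, true_and, Pi.add_apply]
    rcases zmod2_cases (c i) with h | h
    · have hx := hsupp i h
      rw [h, hx]; simp
    · rcases zmod2_cases (x i) with h' | h' <;> rw [h, h'] <;> decide
  have hsub : (univ.filter fun i => x i ≠ 0) ⊆ (univ.filter fun i => c i ≠ 0) := by
    intro i hi
    simp only [Finset.mem_filter, Finset.mem_univ, true_and] at *
    intro hc; exact hi (hsupp i hc)
  rw [hB, Finset.card_sdiff_of_subset hsub]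
  have := Finset.card_le_card hsub
  omega

-- counts on the support of c
lemma on_supp_count {ι : Type} [Fintype ι] [DecidableEq ι] (c x : ι → ZMod 2) :
    (univ.filter fun i => x i ≠ 0 ∧ c i ≠ 0).card
      + (univ.filter fun i => (x + c) i ≠ 0 ∧ c i ≠ 0).card = wtI c := by
  unfold wtI
  have hB : (univ.filter fun i => (x + c) i ≠ 0 ∧ c i ≠ 0)
      = (univ.filter fun i => c i ≠ 0) \ (univ.filter fun i => x i ≠ 0 ∧ c i ≠ 0) := by
    ext i
    simp only [Finset.mem_filter, Finset.mem_sdiff, Finset.mem_univ, true_and, Pi.add_apply]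
    rcases zmod2_cases (c i) with h | h <;>
      rcases zmod2_cases (x i) with h' | h' <;> rw [h, h'] <;> decide
  have hsub : (univ.filter fun i => x i ≠ 0 ∧ c i ≠ 0) ⊆ (univ.filter fun i => c i ≠ 0) := by
    intro i hi
    simp only [Finset.mem_filter, Finset.mem_univ, true_and] at *
    exact hi.2
  rw [hB, Finset.card_sdiff_of_subset hsub]
  have := Finset.card_le_card hsub
  omega

theorem griesmer (k : ℕ) : ∀ (ι : Type) [Fintype ι] [DecidableEq ι]
    (C : Submodule (ZMod 2) (ι → ZMod 2)) (d : ℕ),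
    Module.finrank (ZMod 2) C = k →
    (∀ x ∈ C, x ≠ 0 → d ≤ wtI x) →
    ∑ i ∈ Finset.range k, cd d (2^i) ≤ Fintype.card ι := by
  induction k with
  | zero => intro ι _ _ C d _ _; simp
  | succ k ih =>
    intro ι _ _ C d hrk hd
    have hCne : ∃ c ∈ C, c ≠ (0 : ι → ZMod 2) := by
      by_contra hcon
      push_neg at hcon
      have hbot : C = ⊥ := by
        apply le_antisymm _ bot_le
        intro x hx
        simp [hcon x hx]
      rw [hbot] at hrk
      simp at hrk
    obtain ⟨c₀, hc₀C, hc₀0⟩ := hCne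
    set S : Set ℕ := {w | ∃ x ∈ C, x ≠ 0 ∧ wtI x = w} with hS
    have hSne : S.Nonempty := ⟨wtI c₀, c₀, hc₀C, hc₀0, rfl⟩
    obtain ⟨c, hcC, hc0, hcw⟩ : ∃ x ∈ C, x ≠ 0 ∧ wtI x = sInf S := Nat.sInf_mem hSne
    set w := sInf S with hw
    have hmin : ∀ x ∈ C, x ≠ 0 → w ≤ wtI x := fun x hx hx0 => Nat.sInf_le ⟨x, hx, hx0, rfl⟩
    have hdw : d ≤ w := by rw [← hcw]; exact hd c hcC hc0
    have hwpos : 0 < w := by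
      rw [← hcw]
      rcases Nat.eq_zero_or_pos (wtI c) with h0 | h
      · exfalso
        apply hc0
        have hall : ∀ i, c i = 0 := by
          intro i
          by_contra hne
          have : (univ.filter fun j => c j ≠ 0).card ≠ 0 :=
            Finset.card_ne_zero_of_mem (a := i) (by simp [hne])
          exact this h0
        funext i
        exact hall i
      · exact h
    let π : (ι → ZMod 2) →ₗ[ZMod 2] ({i // c i = 0} → ZMod 2) :=
      LinearMap.funLeft (ZMod 2) (ZMod 2) Subtype.val
    let φ := π.comp C.subtype
    have hker : LinearMap.ker φ = Submodule.span (ZMod 2) {(⟨c, hcC⟩ : C)} := by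
      apply le_antisymm
      · intro x hx
        have hx0 : ∀ i, c i = 0 → x.val i = 0 := by
          intro i hi
          have h' : φ x = 0 := hx
          exact congrFun h' ⟨i, hi⟩
        rcases eq_or_ne x.val 0 with h | h
        · have hxx : x = 0 := Subtype.ext h
          rw [hxx]; exact Submodule.zero_mem _
        · rcases eq_or_ne x.val c with h2 | h2
          · have hxx : x = ⟨c, hcC⟩ := Subtype.ext h2
            rw [hxx]; exact Submodule.mem_span_singleton_self _
          · exfalso
            have hxc : x.val + c ≠ 0 := by
              intro hh
              apply h2
              funext i
              have hi := congrFun hh i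
              simp only [Pi.add_apply, Pi.zero_apply] at hi
              rcases zmod2_cases (x.val i) with h' | h' <;>
                rcases zmod2_cases (c i) with h2' | h2' <;>
                  rw [h', h2'] at hi ⊢ <;> first | rfl | (exfalso; revert hi; decide)
            have h1 := hmin x.val x.prop h
            have h2' := hmin (x.val + c) (C.add_mem x.prop hcC) hxc
            have h3 := wt_add_supported c x.val hx0
            rw [hcw] at h3
            omega
      · rw [Submodule.span_le]
        intro y hy
        simp only [Set.mem_singleton_iff] at hy
        subst hy
        simp only [SetLike.mem_coe, LinearMap.mem_ker]
        funext i
        simpa [φ, π, LinearMap.funLeft] using i.prop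
    have hkrank : Module.finrank (ZMod 2) (LinearMap.ker φ) = 1 := by
      rw [hker]
      exact finrank_span_singleton (by
        intro hh
        exact hc0 (congrArg Subtype.val hh))
    have hrange : Module.finrank (ZMod 2) (LinearMap.range φ) = k := by
      have := LinearMap.finrank_range_add_finrank_ker φ
      rw [hkrank, hrk] at this
      omega
    have hres : ∀ y ∈ LinearMap.range φ, y ≠ 0 → cd w 2 ≤ wtI y := by
      rintro y ⟨x, rfl⟩ hy0
      have hxv0 : x.val ≠ 0 := by
        intro hh
        apply hy0
        have hxx : x = 0 := Subtype.ext hh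
        rw [hxx]; simp
      have hxc0 : x.val + c ≠ 0 := by
        intro hh
        apply hy0
        funext i
        have hi := congrFun hh i.val
        simp only [Pi.add_apply, Pi.zero_apply] at hi
        have hci : c i.val = 0 := i.prop
        rw [hci, add_zero] at hi
        simpa [φ, π, LinearMap.funLeft] using hi
      have h1 := hmin x.val x.prop hxv0
      have h2 := hmin (x.val + c) (C.add_mem x.prop hcC) hxc0
      have e1 := wtI_split c x.val
      have e2 := wtI_split c (x.val + c)
      have e5 := on_supp_count c x.val
      rw [hcw] at e5
      have hsame : (univ.filter fun i => (x.val + c) i ≠ 0 ∧ c i = 0).card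
          = (univ.filter fun i => x.val i ≠ 0 ∧ c i = 0).card := by
        congr 1
        apply Finset.filter_congr
        intro i _
        simp only [Pi.add_apply]
        rcases zmod2_cases (c i) with h | h <;>
          rcases zmod2_cases (x.val i) with h' | h' <;> rw [h, h'] <;> decide
      have hφ : wtI (φ x) = (univ.filter fun i => x.val i ≠ 0 ∧ c i = 0).card := by
        rw [← wtI_restrict c x.val]
        rfl
      rw [hφ, cd_le_iff (by norm_num)]
      omega
    have hcard : Fintype.card {i // c i = 0} + w = Fintype.card ι := by
      rw [Fintype.card_subtype]
      have hw' : w = (univ.filter fun i : ι => c i ≠ 0).card := by rw [← hcw]; rfl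
      have h2 := Finset.card_filter_add_card_filter_not
        (s := (univ : Finset ι)) (p := fun i => c i = 0)
      simp only [Finset.card_univ] at h2
      rw [hw']
      rw [← h2]
    have hih := ih {i // c i = 0} (LinearMap.range φ) (cd w 2) hrange hres
    have hsum : ∑ i ∈ Finset.range (k+1), cd d (2^i)
        ≤ w + ∑ i ∈ Finset.range k, cd (cd w 2) (2^i) := by
      rw [Finset.sum_range_succ']
      have h0 : cd d (2^0) ≤ w := by simpa [cd] using hdw
      have hterm : ∀ i, cd d (2^(i+1)) ≤ cd (cd w 2) (2^i) := by
        intro i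
        rw [cd_cd]
        exact cd_mono _ hdw
      calc ∑ i ∈ Finset.range k, cd d (2^(i+1)) + cd d (2^0)
          ≤ ∑ i ∈ Finset.range k, cd (cd w 2) (2^i) + w :=
            Nat.add_le_add (Finset.sum_le_sum fun i _ => hterm i) h0
        _ = w + ∑ i ∈ Finset.range k, cd (cd w 2) (2^i) := by ring
    omega



def colv (t : ℕ) : Fin 5 → ZMod 2 := fun i => ((t >>> (i:ℕ)) % 2 : ℕ)

def tls : ℕ → ℕ := fun r =>
  [1,2,4,5,6,7,8,9,10,11,12,13,14,15,16,17,18,19,20,21,22,23,24,25,26,27,28,29,30,31,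
   1,2,4,8,16].getD r 0

def dotP (u v : Fin 5 → ZMod 2) : ZMod 2 := ∑ i, u i * v i

def e1 : Fin 5 → ZMod 2 := fun i => if i = 0 then 1 else 0

def colL (m j : ℕ) : Fin 5 → ZMod 2 :=
  if j < 31*m then colv (j % 31 + 1) else colv (tls (j - 31*m))

def dotL (v : Fin 5 → ZMod 2) : (Fin 5 → ZMod 2) →ₗ[ZMod 2] ZMod 2 where
  toFun u := ∑ i, u i * v i
  map_add' a b := by
    simp [Pi.add_apply, add_mul, Finset.sum_add_distrib]
  map_smul' r a := by
    simp [Finset.mul_sum, mul_assoc]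

def phi (m : ℕ) : (Fin 5 → ZMod 2) →ₗ[ZMod 2] (Fin (31*m+35) → ZMod 2) :=
  LinearMap.pi (fun j => dotL (colL m (j:ℕ)))

lemma phi_apply (m : ℕ) (u : Fin 5 → ZMod 2) (j : Fin (31*m+35)) :
    phi m u j = dotP u (colL m (j:ℕ)) := rfl

-- generic sum splitting
lemma sum_range_add' {M : Type} [AddCommMonoid M] (f : ℕ → M) (a b : ℕ) :
    ∑ j ∈ Finset.range (a+b), f j
      = ∑ j ∈ Finset.range a, f j + ∑ j ∈ Finset.range b, f (a+j) := by
  induction b with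
  | zero => simp
  | succ b ihb =>
    rw [← Nat.add_assoc, Finset.sum_range_succ, ihb, Finset.sum_range_succ, add_assoc]

lemma sum_periodic {M : Type} [AddCommMonoid M] (g : ℕ → M) (m : ℕ) :
    ∑ j ∈ Finset.range (31*m), g (j % 31) = m • ∑ r ∈ Finset.range 31, g r := by
  induction m with
  | zero => simp
  | succ m ihm =>
    have h31 : 31*(m+1) = 31*m + 31 := by ring
    rw [h31, sum_range_add', ihm]
    have : ∑ j ∈ Finset.range 31, g ((31*m + j) % 31) = ∑ r ∈ Finset.range 31, g r := by
      apply Finset.sum_congr rfl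
      intro j hj
      rw [Finset.mem_range] at hj
      congr 1
      omega
    rw [this, succ_nsmul]

-- master splitting lemma for sums over the coordinates
lemma sum_col {M : Type} [AddCommMonoid M] (m : ℕ) (F : (Fin 5 → ZMod 2) → M) :
    ∑ j : Fin (31*m+35), F (colL m (j:ℕ))
      = m • (∑ r : Fin 31, F (colv ((r:ℕ)+1))) + ∑ r : Fin 35, F (colv (tls (r:ℕ))) := by
  rw [Fin.sum_univ_eq_sum_range (fun j => F (colL m j)) (31*m+35)]
  rw [sum_range_add' (fun j => F (colL m j)) (31*m) 35]
  congr 1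
  · rw [Fin.sum_univ_eq_sum_range (fun r => F (colv (r+1))) 31, ← sum_periodic]
    apply Finset.sum_congr rfl
    intro j hj
    rw [Finset.mem_range] at hj
    unfold colL
    rw [if_pos hj]
  · rw [Fin.sum_univ_eq_sum_range (fun r => F (colv (tls r))) 35]
    apply Finset.sum_congr rfl
    intro j hj
    rw [Finset.mem_range] at hj
    unfold colL
    rw [if_neg (by omega)]
    have h' : 31*m + j - 31*m = j := by omega
    rw [h']

-- decidable facts
set_option maxRecDepth 100000 in
set_option maxHeartbeats 2000000 in
lemma fact1 : ∀ u : Fin 5 → ZMod 2, u ≠ 0 →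
    (∑ r : Fin 31, if dotP u (colv ((r:ℕ)+1)) ≠ 0 then (1:ℕ) else 0) = 16 := by decide

set_option maxRecDepth 100000 in
set_option maxHeartbeats 2000000 in
lemma fact2 : ∀ u : Fin 5 → ZMod 2, u ≠ 0 →
    16 ≤ (∑ r : Fin 35, if dotP u (colv (tls (r:ℕ))) ≠ 0 then (1:ℕ) else 0) := by decide

set_option maxRecDepth 100000 in
set_option maxHeartbeats 2000000 in
lemma fact3 : (∑ r : Fin 35, if dotP e1 (colv (tls (r:ℕ))) ≠ 0 then (1:ℕ) else 0) = 16 := by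
  decide

set_option maxRecDepth 100000 in
set_option maxHeartbeats 8000000 in
lemma fact4 : ∀ u w : Fin 5 → ZMod 2,
    (∑ r : Fin 31, dotP u (colv ((r:ℕ)+1)) * dotP w (colv ((r:ℕ)+1))) = 0 := by decide

set_option maxRecDepth 100000 in
set_option maxHeartbeats 8000000 in
lemma fact5 : ∀ u : Fin 5 → ZMod 2, u ≠ 0 → ∃ w : Fin 5 → ZMod 2,
    (∑ r : Fin 35, dotP u (colv (tls (r:ℕ))) * dotP w (colv (tls (r:ℕ)))) ≠ 0 := by decide

lemma e1_ne_zero : e1 ≠ 0 := by decide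

-- weight of codewords
lemma wt_phi (m : ℕ) (u : Fin 5 → ZMod 2) (hu : u ≠ 0) :
    wt (phi m u) = m * 16 + ∑ r : Fin 35, if dotP u (colv (tls (r:ℕ))) ≠ 0 then (1:ℕ) else 0 := by
  unfold wt
  rw [Finset.card_filter]
  have : ∀ j : Fin (31*m+35), (if phi m u j ≠ 0 then (1:ℕ) else 0)
      = (fun v => if dotP u v ≠ 0 then (1:ℕ) else 0) (colL m (j:ℕ)) := by
    intro j; rw [phi_apply]
  rw [Finset.sum_congr rfl (fun j _ => this j)]
  rw [sum_col m (fun v => if dotP u v ≠ 0 then (1:ℕ) else 0)]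
  rw [fact1 u hu, smul_eq_mul]

lemma wt_phi_lb (m : ℕ) (u : Fin 5 → ZMod 2) (hu : u ≠ 0) :
    m * 16 + 16 ≤ wt (phi m u) := by
  rw [wt_phi m u hu]
  have := fact2 u hu
  omega

lemma wt_phi_e1 (m : ℕ) : wt (phi m e1) = m * 16 + 16 := by
  rw [wt_phi m e1 e1_ne_zero, fact3]

-- inner products of codewords
lemma inner_phi (m : ℕ) (u w : Fin 5 → ZMod 2) :
    (∑ j, phi m u j * phi m w j)
      = ∑ r : Fin 35, dotP u (colv (tls (r:ℕ))) * dotP w (colv (tls (r:ℕ))) := by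
  have : ∀ j : Fin (31*m+35), phi m u j * phi m w j
      = (fun v => dotP u v * dotP w v) (colL m (j:ℕ)) := by
    intro j; rw [phi_apply, phi_apply]
  rw [Finset.sum_congr rfl (fun j _ => this j)]
  rw [sum_col m (fun v => dotP u v * dotP w v), fact4 u w]
  simp


lemma wt_eq_wtI {n : ℕ} (x : Fin n → ZMod 2) : wt x = wtI x := rfl

lemma wt_zero {n : ℕ} : wt (0 : Fin n → ZMod 2) = 0 := by simp [wt]

lemma phi_ker (m : ℕ) : LinearMap.ker (phi m) = ⊥ := by
  rw [LinearMap.ker_eq_bot']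
  intro u hu
  by_contra h0
  have hlb := wt_phi_lb m u h0
  rw [hu, wt_zero] at hlb
  omega

noncomputable def codeC (m : ℕ) : Submodule (ZMod 2) (Fin (31*m+35) → ZMod 2) :=
  LinearMap.range (phi m)

lemma finrank_codeC (m : ℕ) : Module.finrank (ZMod 2) (codeC m) = 5 := by
  have h := LinearMap.finrank_range_add_finrank_ker (phi m)
  rw [phi_ker, finrank_bot, Module.finrank_fin_fun] at h
  simp [codeC] at h
  exact h

lemma phi_e1_ne (m : ℕ) : phi m e1 ≠ 0 := by
  intro hh
  have := wt_phi_e1 m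
  rw [hh, wt_zero] at this
  omega

lemma minWt_codeC (m : ℕ) : minWt (codeC m) = m*16+16 := by
  unfold minWt
  apply le_antisymm
  · exact Nat.sInf_le ⟨phi m e1, ⟨e1, rfl⟩, phi_e1_ne m, wt_phi_e1 m⟩
  · apply le_csInf
    · exact ⟨m*16+16, phi m e1, ⟨e1, rfl⟩, phi_e1_ne m, wt_phi_e1 m⟩
    rintro b ⟨x, hxC, hx0, rfl⟩
    obtain ⟨u, rfl⟩ := hxC
    have hu : u ≠ 0 := fun hh => hx0 (by rw [hh, map_zero])
    exact wt_phi_lb m u hu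

lemma lcd_codeC (m : ℕ) : IsLCD (codeC m) := by
  unfold IsLCD
  rw [eq_bot_iff]
  intro x hx
  rw [Submodule.mem_inf] at hx
  obtain ⟨hx1, hx2⟩ := hx
  obtain ⟨u, rfl⟩ := hx1
  rcases eq_or_ne u 0 with hu | hu
  · rw [hu, map_zero]
    exact Submodule.zero_mem _
  · exfalso
    obtain ⟨w, hw⟩ := fact5 u hu
    apply hw
    have h2 : ∀ y ∈ codeC m, ∑ i, phi m u i * y i = 0 := hx2
    rw [← inner_phi m u w]
    exact h2 (phi m w) ⟨w, rfl⟩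

lemma sum_cd5 (m d : ℕ) (hd : 16*m+17 ≤ d) :
    31*m+36 ≤ ∑ i ∈ Finset.range 5, cd d (2^i) := by
  have hle : ∑ i ∈ Finset.range 5, cd (16*m+17) (2^i) ≤ ∑ i ∈ Finset.range 5, cd d (2^i) :=
    Finset.sum_le_sum fun i _ => cd_mono _ hd
  have he : ∑ i ∈ Finset.range 5, cd (16*m+17) (2^i) = 31*m+36 := by
    simp only [Finset.sum_range_succ, Finset.sum_range_zero, cd]
    norm_num
    omega
  omega

theorem lcd_dim5_minusTwo (n : ℕ) (hn : 5 ≤ n) (h : n % 31 = 4) :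
    dLCD n 5 = 16 * n / 31 - 2 := by
  obtain ⟨m, rfl⟩ : ∃ m, n = 31*m+35 := ⟨n/31 - 1, by omega⟩
  have htarget : 16 * (31*m+35) / 31 - 2 = m*16+16 := by omega
  rw [htarget]
  unfold dLCD
  set S : Set ℕ := {d | ∃ C : Submodule (ZMod 2) (Fin (31*m+35) → ZMod 2),
    Module.finrank (ZMod 2) C = 5 ∧ IsLCD C ∧ minWt C = d} with hSdef
  have hmem : (m*16+16) ∈ S := ⟨codeC m, finrank_codeC m, lcd_codeC m, minWt_codeC m⟩
  have hub : ∀ d ∈ S, d ≤ m*16+16 := by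
    rintro d ⟨C, hrk, _, hmw⟩
    by_contra hgt
    push_neg at hgt
    have hlow : ∀ x ∈ C, x ≠ 0 → d ≤ wtI x := by
      intro x hx hx0
      rw [← wt_eq_wtI, ← hmw]
      exact Nat.sInf_le ⟨x, hx, hx0, rfl⟩
    have hg := griesmer 5 (Fin (31*m+35)) C d hrk hlow
    rw [Fintype.card_fin] at hg
    have hs := sum_cd5 m d (by omega)
    omega
  exact le_antisymm (csSup_le ⟨_, hmem⟩ hub)
    (le_csSup ⟨m*16+16, fun d hd => hub d hd⟩ hmem)
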